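/- Let F be a field and B a finitely generated associative F-algebra which is an Ore domain, such that the division ring of fractions D = Frac(B) is finite-dimensional over its center Z. Then Z is a finitely generated field extension of F. -/

import Mathlib

set_option maxHeartbeats 1000000 in
/-- Let `B` be a finitely generated `F`-subalgebra of a division ring `D` which is
the ring of fractions of `B` (every element of `D` is `c⁻¹ * b` with `b, c ∈ B`,
`c ≠ 0`), and suppose `D` is finite dimensional over its center `Z`.  Then `Z` is a
finitely generated field extension of `F`. -/
theorem center_fg_of_fraction_division_ring
    (F : Type*) [Field F] (D : Type*) [DivisionRing D] [Algebra F D]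
    (B : Subalgebra F D)
    (hBfg : ∃ t : Finset D, Algebra.adjoin F (t : Set D) = B)
    (hfrac : ∀ d : D, ∃ b c : D, b ∈ B ∧ c ∈ B ∧ c ≠ 0 ∧ d = c⁻¹ * b)
    (N : ℕ) (v : Fin N → D)
    (hbasis : ∀ d : D, ∃ c : Fin N → D,
        (∀ i, c i ∈ Subring.center D) ∧ d = ∑ i, c i * v i) :
    ∃ s : Finset D, (s : Set D) ⊆ Subring.center D ∧
      ∀ z ∈ Subring.center D,
        z ∈ Subfield.closure (Set.range (algebraMap F D) ∪ (s : Set D)) := by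
  classical
  obtain ⟨t, ht⟩ := hBfg
  set Z := Subring.center D with hZdef
  -- `v` spans `D` over the center `Z`
  have hspan : Submodule.span Z (Set.range v) = ⊤ := by
    rw [Submodule.eq_top_iff']
    intro d
    obtain ⟨c, hc, rfl⟩ := hbasis d
    refine Submodule.sum_mem _ fun i _ => ?_
    have hsm : c i * v i = (⟨c i, hc i⟩ : Z) • v i := rfl
    rw [hsm]
    exact Submodule.smul_mem _ _ (Submodule.subset_span ⟨i, rfl⟩)
  haveI : Module.Finite Z D :=
    ⟨⟨Finset.univ.image v, by
        rw [Finset.coe_image, Finset.coe_univ, Set.image_univ]; exact hspan⟩⟩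
  set n := Module.finrank Z D with hn
  let w : Module.Basis (Fin n) Z D := Module.finBasis Z D
  -- the finite set of "structure constants"
  let s : Finset D := (t ×ˢ ((Finset.univ : Finset (Fin n)) ×ˢ (Finset.univ : Finset (Fin n)))).image
      fun p => ((w.repr (p.1 * w p.2.1)) p.2.2 : D)
  refine ⟨s, ?_, ?_⟩
  · intro x hx
    simp only [s, Finset.coe_image, Set.mem_image] at hx
    obtain ⟨p, -, rfl⟩ := hx
    exact ((w.repr _) _).2
  intro z hz
  set K := Subfield.closure (Set.range (algebraMap F D) ∪ (s : Set D)) with hK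
  -- key step: for every `b ∈ B`, all coordinates of `b * w i` lie in `K`
  have key : ∀ b ∈ B, ∀ i j : Fin n, ((w.repr (b * w i)) j : D) ∈ K := by
    intro b hb
    rw [← ht] at hb
    induction hb using Algebra.adjoin_induction with
    | mem x hx =>
      intro i j
      apply Subfield.subset_closure
      right
      exact Finset.mem_coe.2 (Finset.mem_image.2
        ⟨(x, i, j), by simpa [Finset.mem_product] using hx, rfl⟩)
    | algebraMap r =>
      intro i j
      have hcomm : algebraMap F D r ∈ Z := by
        rw [Subring.mem_center_iff]; intro g; exact (Algebra.commutes r g).symm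
      have hsm : algebraMap F D r * w i = (⟨algebraMap F D r, hcomm⟩ : Z) • w i := rfl
      rw [hsm, map_smul]
      simp only [Finsupp.smul_apply, w.repr_self]
      by_cases hij : i = j
      · subst hij
        simp only [Finsupp.single_eq_same, smul_eq_mul, mul_one]
        exact Subfield.subset_closure (Or.inl ⟨r, rfl⟩)
      · simp only [Finsupp.single_eq_of_ne (Ne.symm hij), smul_eq_mul, mul_zero]
        push_cast
        exact zero_mem K
    | add x y hx hy ihx ihy =>
      intro i j
      have : (x + y) * w i = x * w i + y * w i := add_mul _ _ _
      rw [this, map_add]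
      push_cast
      exact add_mem (ihx i j) (ihy i j)
    | mul x y hx hy ihx ihy =>
      intro i j
      have hexp : (x * y) * w i = ∑ k, (w.repr (y * w i)) k • (x * w k) := by
        calc (x * y) * w i = x * (y * w i) := by rw [mul_assoc]
          _ = x * (∑ k, (w.repr (y * w i)) k • w k) := by rw [Module.Basis.sum_repr]
          _ = ∑ k, x * ((w.repr (y * w i)) k • w k) := by rw [Finset.mul_sum]
          _ = ∑ k, (w.repr (y * w i)) k • (x * w k) := by
              refine Finset.sum_congr rfl fun k _ => ?_
              have hc : ((w.repr (y * w i)) k : D) ∈ Subring.center D :=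
                ((w.repr (y * w i)) k).2
              have : x * (((w.repr (y * w i)) k : D) * w k)
                  = ((w.repr (y * w i)) k : D) * (x * w k) := by
                rw [← mul_assoc, (Subring.mem_center_iff.1 hc x), mul_assoc]
              exact this
      rw [hexp, map_sum]
      simp only [map_smul, Finsupp.coe_finset_sum, Finset.sum_apply, Finsupp.smul_apply,
        smul_eq_mul]
      push_cast
      exact Subfield.sum_mem K fun k _ => Subfield.mul_mem K (ihy i k) (ihx k j)
  -- now express `z`
  obtain ⟨b, c, hbB, hcB, hc0, hzbc⟩ := hfrac z
  have hbzc : b = z * c := by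
    have : c * z = b := by
      rw [hzbc, ← mul_assoc, mul_inv_cancel₀ hc0, one_mul]
    rw [← this, (Subring.mem_center_iff.1 hz c)]
  -- some coordinate of some `c * w i` is nonzero
  have hex : ∃ i j : Fin n, (w.repr (c * w i)) j ≠ 0 := by
    by_contra h
    push_neg at h
    have hcw : ∀ i, c * w i = 0 := by
      intro i
      have : w.repr (c * w i) = 0 := Finsupp.ext fun j => h i j
      have := congrArg w.repr.symm this
      simpa using this
    obtain ⟨d, hd, hrepr⟩ := hbasis c⁻¹
    -- c * c⁻¹ = 1, but c * c⁻¹ expressed via basis...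
    have h1 : (1 : D) = c * c⁻¹ := (mul_inv_cancel₀ hc0).symm
    have hsum : c⁻¹ = ∑ k, (w.repr c⁻¹) k • w k := (Module.Basis.sum_repr w c⁻¹).symm
    have : (1 : D) = ∑ k, ((w.repr c⁻¹) k : D) * (c * w k) := by
      rw [h1]
      conv_lhs => rw [hsum]
      rw [Finset.mul_sum]
      refine Finset.sum_congr rfl fun k _ => ?_
      have hc' : ((w.repr c⁻¹) k : D) ∈ Subring.center D := ((w.repr c⁻¹) k).2
      show c * (((w.repr c⁻¹) k : D) * w k) = _
      rw [← mul_assoc, Subring.mem_center_iff.1 hc' c, mul_assoc]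
    rw [Finset.sum_congr rfl (fun k _ => by rw [hcw k, mul_zero]), Finset.sum_const_zero] at this
    exact one_ne_zero this
  obtain ⟨i, j, hij⟩ := hex
  -- compare coordinates of `b * w i = z * (c * w i)`
  have hcoord : ((w.repr (b * w i)) j : D) = z * ((w.repr (c * w i)) j : D) := by
    have hbw : b * w i = (⟨z, hz⟩ : Z) • (c * w i) := by
      rw [hbzc]
      show z * c * w i = z * (c * w i)
      rw [mul_assoc]
    rw [hbw, map_smul]
    simp only [Finsupp.smul_apply, smul_eq_mul]
    push_cast
    rfl
  have hcj : ((w.repr (c * w i)) j : D) ≠ 0 := by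
    intro h
    exact hij (Subtype.ext h)
  have hz' : z = ((w.repr (b * w i)) j : D) * (((w.repr (c * w i)) j : D))⁻¹ := by
    rw [hcoord, mul_assoc, mul_inv_cancel₀ hcj, mul_one]
  rw [hz']
  exact Subfield.mul_mem K (key b hbB i j) (Subfield.inv_mem K (key c hcB i j))
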